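/- For every graph G and every set A of edges of G, the isolation number of the graph G_A obtained by subdividing each edge in A once satisfies ι(G) ≤ ι(G_A) ≤ ι(G) + |A|. -/

import Mathlib

open SimpleGraph

/-- `v` lies in the closed neighbourhood of the set `D`. -/
def inClosedNbhd {V : Type*} (G : SimpleGraph V) (D : Set V) (v : V) : Prop :=
  ∃ d ∈ D, d = v ∨ G.Adj d v

/-- `D` is an isolating set of `G`: the graph induced on the vertices outside
`N[D]` has no edges. -/
def IsIsolating {V : Type*} (G : SimpleGraph V) (D : Set V) : Prop :=
  ∀ u v : V, G.Adj u v → inClosedNbhd G D u ∨ inClosedNbhd G D v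

/-- The isolation number of a finite graph. -/
noncomputable def iso {V : Type*} (G : SimpleGraph V) [Fintype V] : ℕ :=
  sInf {n | ∃ D : Finset V, D.card = n ∧ IsIsolating G ↑D}

/-- The graph obtained from `G` by subdividing each edge in `A` once; the new
(subdivision) vertices are the elements of `A`. -/
def subdivide {V : Type*} (G : SimpleGraph V) (A : Finset (Sym2 V)) :
    SimpleGraph (V ⊕ {e : Sym2 V // e ∈ A}) where
  Adj x y :=
    match x, y with
    | Sum.inl u, Sum.inl v => G.Adj u v ∧ s(u, v) ∉ A
    | Sum.inl u, Sum.inr e => u ∈ (e : Sym2 V)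
    | Sum.inr e, Sum.inl u => u ∈ (e : Sym2 V)
    | Sum.inr _, Sum.inr _ => False
  symm := by
    constructor
    rintro (u | e) (v | f) h <;> dsimp only at h ⊢ <;>
      first
        | exact ⟨h.1.symm, by rw [Sym2.eq_swap]; exact h.2⟩
        | exact h
        | exact h.elim
  loopless := by
    constructor
    rintro (u | e) h <;> dsimp only at h <;>
      first
        | exact G.loopless.irrefl u h.1
        | exact h

/-- A graph is `(ι,q)`-critical. -/
def IotaCritical {V : Type*} (G : SimpleGraph V) [Fintype V] (q : ℕ) : Prop :=
  (∀ A : Finset (Sym2 V), ↑A ⊆ G.edgeSet → A.card = q →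
      iso G < iso (subdivide G A)) ∧
  (∃ A : Finset (Sym2 V), ↑A ⊆ G.edgeSet ∧ A.card = q - 1 ∧
      iso (subdivide G A) = iso G)

lemma iso_set_nonempty {V : Type*} [Fintype V] (G : SimpleGraph V) :
    {n | ∃ D : Finset V, D.card = n ∧ IsIsolating G ↑D}.Nonempty :=
  ⟨(Finset.univ : Finset V).card, Finset.univ, rfl,
    fun u _ _ => Or.inl ⟨u, by simp, Or.inl rfl⟩⟩

lemma iso_le_card {V : Type*} [Fintype V] (G : SimpleGraph V) (D : Finset V)
    (h : IsIsolating G ↑D) : iso G ≤ D.card :=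
  Nat.sInf_le ⟨D, rfl, h⟩

lemma exists_iso {V : Type*} [Fintype V] (G : SimpleGraph V) :
    ∃ D : Finset V, D.card = iso G ∧ IsIsolating G ↑D :=
  Nat.sInf_mem (iso_set_nonempty G)

theorem stmt1 {V : Type*} [Fintype V] (G : SimpleGraph V) (A : Finset (Sym2 V))
    (hA : ↑A ⊆ G.edgeSet) :
    iso G ≤ iso (subdivide G A) ∧ iso (subdivide G A) ≤ iso G + A.card := by
  classical
  have hcover : ∀ (e : Sym2 V), e ∈ A → ∀ u ∈ e,
      e.out.1 = u ∨ G.Adj e.out.1 u := by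
    intro e heA u hu
    by_cases hpu : e.out.1 = u
    · exact Or.inl hpu
    · right
      have hp : e.out.1 ∈ e := Sym2.out_fst_mem _
      have hee : e = s(e.out.1, u) := (Sym2.mem_and_mem_iff hpu).mp ⟨hp, hu⟩
      have he : e ∈ G.edgeSet := hA heA
      rw [hee, SimpleGraph.mem_edgeSet] at he
      exact he
  constructor
  · -- lower bound
    obtain ⟨D', hcard, hiso⟩ := exists_iso (subdivide G A)
    let f : (V ⊕ {e : Sym2 V // e ∈ A}) → V := fun x =>
      match x with
      | Sum.inl v => v
      | Sum.inr e => (e : Sym2 V).out.1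
    have hfmem : ∀ d ∈ D', f d ∈ D'.image f := by
      intro d hd; exact Finset.mem_image.mpr ⟨d, hd, rfl⟩
    have htrans : ∀ u : V, inClosedNbhd (subdivide G A) ↑D' (Sum.inl u) →
        inClosedNbhd G ↑(D'.image f) u := by
      rintro u ⟨d, hd, hdu⟩
      refine ⟨f d, hfmem d hd, ?_⟩
      rcases d with v | e
      · rcases hdu with h | h
        · exact Or.inl (Sum.inl.inj h)
        · exact Or.inr h.1
      · rcases hdu with h | h
        · exact absurd h (by simp)
        · exact hcover e e.2 u h
    have hDiso : IsIsolating G ↑(D'.image f) := by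
      intro u v huv
      by_cases hmem : s(u, v) ∈ A
      · have hadj : (subdivide G A).Adj (Sum.inl u) (Sum.inr ⟨s(u, v), hmem⟩) := by
          show u ∈ s(u, v); simp
        rcases hiso _ _ hadj with h | h
        · exact Or.inl (htrans u h)
        · obtain ⟨d, hd, hde⟩ := h
          have hfd : f d ∈ D'.image f := hfmem d hd
          rcases d with w | e'
          · rcases hde with h' | h'
            · exact absurd h' (by simp)
            · have hw : w ∈ s(u, v) := h'
              rcases Sym2.mem_iff.mp hw with h'' | h''
              · exact Or.inl ⟨w, hfd, Or.inl h''⟩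
              · exact Or.inr ⟨w, hfd, Or.inl h''⟩
          · rcases hde with h' | h'
            · have he' : (e' : Sym2 V) = s(u, v) := by
                have := Sum.inr.inj h'
                exact congrArg Subtype.val this
              have hp : (e' : Sym2 V).out.1 ∈ (e' : Sym2 V) := Sym2.out_fst_mem _
              rw [he'] at hp
              rcases Sym2.mem_iff.mp hp with h'' | h''
              · exact Or.inl ⟨f (Sum.inr e'), hfd, Or.inl (by
                    show (e' : Sym2 V).out.1 = u; rw [he']; exact h'')⟩
              · exact Or.inr ⟨f (Sum.inr e'), hfd, Or.inl (by
                    show (e' : Sym2 V).out.1 = v; rw [he']; exact h'')⟩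
            · exact absurd h' (by simp [subdivide])
      · have hadj : (subdivide G A).Adj (Sum.inl u) (Sum.inl v) := ⟨huv, hmem⟩
        rcases hiso _ _ hadj with h | h
        · exact Or.inl (htrans u h)
        · exact Or.inr (htrans v h)
    calc iso G ≤ (D'.image f).card := iso_le_card G _ hDiso
      _ ≤ D'.card := Finset.card_image_le
      _ = iso (subdivide G A) := hcard
  · -- upper bound
    obtain ⟨D, hcard, hiso⟩ := exists_iso G
    have hmemD : ∀ d ∈ D, (Sum.inl d : V ⊕ {e : Sym2 V // e ∈ A}) ∈
        D.image Sum.inl ∪ A.attach.image Sum.inr := by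
      intro d hd
      exact Finset.mem_union_left _ (Finset.mem_image.mpr ⟨d, hd, rfl⟩)
    have hmemA : ∀ e : {e : Sym2 V // e ∈ A}, (Sum.inr e : V ⊕ _) ∈
        D.image Sum.inl ∪ A.attach.image Sum.inr := by
      intro e
      exact Finset.mem_union_right _
        (Finset.mem_image.mpr ⟨e, Finset.mem_attach _ _, rfl⟩)
    have hD'iso : IsIsolating (subdivide G A)
        ↑(D.image Sum.inl ∪ A.attach.image Sum.inr) := by
      rintro (u | e) (v | e') hadj
      · obtain ⟨huv, hnA⟩ := hadj
        have key : ∀ w : V, inClosedNbhd G ↑D w →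
            inClosedNbhd (subdivide G A)
              ↑(D.image Sum.inl ∪ A.attach.image Sum.inr) (Sum.inl w) := by
          rintro w ⟨d, hd, hdw⟩
          rcases hdw with h | h
          · exact ⟨Sum.inl d, hmemD d hd, Or.inl (by rw [h])⟩
          · by_cases hdwA : s(d, w) ∈ A
            · exact ⟨Sum.inr ⟨s(d, w), hdwA⟩, hmemA _, Or.inr (by simp [subdivide])⟩
            · exact ⟨Sum.inl d, hmemD d hd, Or.inr ⟨h, hdwA⟩⟩
        rcases hiso u v huv with h | h
        · exact Or.inl (key u h)
        · exact Or.inr (key v h)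
      · exact Or.inr ⟨Sum.inr e', hmemA e', Or.inl rfl⟩
      · exact Or.inl ⟨Sum.inr e, hmemA e, Or.inl rfl⟩
      · exact hadj.elim
    have hcard' : (D.image Sum.inl ∪ A.attach.image Sum.inr).card
        ≤ iso G + A.card := by
      calc (D.image Sum.inl ∪ A.attach.image Sum.inr).card
          ≤ (D.image Sum.inl).card + (A.attach.image Sum.inr).card :=
            Finset.card_union_le _ _
        _ ≤ D.card + A.card := by
            gcongr
            · exact Finset.card_image_le
            · exact Finset.card_image_le.trans (le_of_eq (Finset.card_attach))
        _ = iso G + A.card := by rw [hcard]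
    exact (iso_le_card _ _ hD'iso).trans hcard'
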